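/- Let ℓ ≥ 1, γ ∈ (0,1), ε ≥ 0, z ∈ {0,1}^ℓ, and let p, q be as in the LP instance. Then Σ_{y∈Y} min{ e^{ε}(1−γ)·q_y/p_y , 1 }·p_y ≥ 1 − γ. -/

import Mathlib

open scoped Classical

noncomputable section

/-- Feasibility for the credit-retrofitting linear program: `r : Y → [0,1]` and, with
`R = Σ_y r_y p_y`, for every `y` we have `e^{-ε} q_y R ≤ r_y p_y ≤ e^{ε} q_y R`. -/
def lpFeasible {Y : Type*} [Fintype Y] (ε : ℝ) (p q r : Y → ℝ) : Prop :=
  (∀ y, r y ∈ Set.Icc (0 : ℝ) 1) ∧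
  ∀ y, Real.exp (-ε) * q y * (∑ y', r y' * p y') ≤ r y * p y ∧
       r y * p y ≤ Real.exp ε * q y * (∑ y', r y' * p y')

/-- The counterfactual distribution `q` of the LP instance: uniform on `{0,1}^{ℓ+1}`. -/
def lpQ (ℓ : ℕ) : (Fin (ℓ + 1) → Bool) → ℝ := fun _ => (1 / 2) ^ (ℓ + 1)

/-- The distribution `p` of the LP instance: uniform except on `z∥0` and `z∥1`. -/
def lpP (ℓ : ℕ) (γ ε : ℝ) (z : Fin ℓ → Bool) : (Fin (ℓ + 1) → Bool) → ℝ := fun y =>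
  if y = Fin.snoc z false then (1 / 2) ^ (ℓ + 1) * (Real.exp (-ε) * (1 - γ))
  else if y = Fin.snoc z true then (1 / 2) ^ (ℓ + 1) * (2 - Real.exp (-ε) * (1 - γ))
  else (1 / 2) ^ (ℓ + 1)

set_option maxHeartbeats 1000000 in
/-- For the LP instance given by `lpP` and `lpQ`:
`Σ_y min{ e^ε (1-γ) q_y / p_y , 1 } · p_y ≥ 1 - γ`. -/
theorem stmt12 (ℓ : ℕ) (hℓ : 1 ≤ ℓ) (γ ε : ℝ) (hγ0 : 0 < γ) (hγ1 : γ < 1) (hε : 0 ≤ ε)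
    (z : Fin ℓ → Bool) :
    1 - γ ≤ ∑ y, min (Real.exp ε * (1 - γ) * (lpQ ℓ y / lpP ℓ γ ε z y)) 1 *
      lpP ℓ γ ε z y := by
  classical
  set E := Real.exp ε with hE
  set S := Real.exp (-ε) with hS
  set u : ℝ := (1/2 : ℝ) ^ (ℓ + 1) with hu
  have hupos : (0:ℝ) < u := by positivity
  have hES : E * S = 1 := by rw [hE, hS, ← Real.exp_add]; simp
  have hE1 : 1 ≤ E := Real.one_le_exp hε
  have hSpos : 0 < S := Real.exp_pos _
  have hEpos : 0 < E := Real.exp_pos _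
  have hS1 : S ≤ 1 := by
    rw [hS]
    calc Real.exp (-ε) ≤ Real.exp 0 := Real.exp_le_exp.2 (by linarith)
    _ = 1 := Real.exp_zero
  have hu4 : u ≤ 1/4 := by
    have : (1/2:ℝ) ^ (ℓ+1) ≤ (1/2:ℝ) ^ 2 :=
      pow_le_pow_of_le_one (by norm_num) (by norm_num) (by omega)
    rw [hu]; nlinarith [this]
  have hun : u * (2:ℝ) ^ (ℓ+1) = 1 := by
    rw [hu, ← mul_pow]; norm_num
  set y0 : Fin (ℓ+1) → Bool := Fin.snoc z false with hy0
  set y1 : Fin (ℓ+1) → Bool := Fin.snoc z true with hy1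
  have hne : y0 ≠ y1 := by
    intro h
    have := congrFun h (Fin.last ℓ)
    simp [hy0, hy1] at this
  set f : (Fin (ℓ+1) → Bool) → ℝ := fun y =>
    min (E * (1 - γ) * (lpQ ℓ y / lpP ℓ γ ε z y)) 1 * lpP ℓ γ ε z y with hf
  have h1γ : (0:ℝ) < 1 - γ := by linarith
  have hS'lt : S * (1 - γ) < 1 := by nlinarith
  have hq : ∀ y, lpQ ℓ y = u := fun y => rfl
  have hp0 : lpP ℓ γ ε z y0 = u * (S * (1 - γ)) := by
    simp only [lpP, if_true]
    exact if_pos hy0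
  have hne2 : y1 ≠ Fin.snoc z false := by
    rw [hy1]; intro h; have := congrFun h (Fin.last ℓ); simp at this
  have hp1 : lpP ℓ γ ε z y1 = u * (2 - S * (1 - γ)) := by
    simp only [lpP, if_true]
    rw [if_neg hne2]
    exact if_pos hy1
  have hf0 : f y0 = u * (S * (1 - γ)) := by
    rw [hf]
    simp only [hp0, hq]
    have hmin : min (E * (1 - γ) * (u / (u * (S * (1 - γ))))) 1 = 1 := by
      apply min_eq_right
      rw [div_mul_cancel_left₀ hupos.ne', ← div_eq_mul_inv,
        le_div_iff₀ (mul_pos hSpos h1γ), one_mul]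
      nlinarith
    rw [hmin, one_mul]
  have hppos : 0 < u * (2 - S * (1 - γ)) := by nlinarith
  have hf1 : f y1 = min (E * (1 - γ) * u) (u * (2 - S * (1 - γ))) := by
    rw [hf]
    simp only [hp1, hq]
    rw [min_mul_of_nonneg _ _ hppos.le, one_mul]
    congr 1
    field_simp
    exact div_self (ne_of_gt (by nlinarith))
  have hfgen : ∀ y, y ≠ y0 → y ≠ y1 → f y = min (E * (1 - γ)) 1 * u := by
    intro y h0 h1
    have hp : lpP ℓ γ ε z y = u := by
      simp only [lpP]
      rw [if_neg (hy0 ▸ h0), if_neg (hy1 ▸ h1)]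
    rw [hf]
    simp only [hp, hq]
    rw [div_self hupos.ne', mul_one]
  have hsplit := Finset.sum_sdiff (f := f) (Finset.subset_univ ({y0, y1} : Finset _))
  have hpair : ∑ y ∈ ({y0, y1} : Finset _), f y = f y0 + f y1 := Finset.sum_pair hne
  have hcardY : Fintype.card (Fin (ℓ+1) → Bool) = 2 ^ (ℓ+1) := by
    simp [Fintype.card_fun]
  have hcard : ((Finset.univ \ ({y0, y1} : Finset _)).card : ℝ) = (2:ℝ) ^ (ℓ+1) - 2 := by
    rw [Finset.card_sdiff_of_subset (Finset.subset_univ _), Finset.card_pair hne,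
      Finset.card_univ, hcardY]
    have h4 : 4 ≤ 2 ^ (ℓ+1) := by
      calc (4:ℕ) = 2^2 := by norm_num
      _ ≤ 2 ^ (ℓ+1) := Nat.pow_le_pow_right (by norm_num) (by omega)
    push_cast [Nat.cast_sub (by omega : 2 ≤ 2 ^ (ℓ+1))]
    try ring
  have hconst : ∑ y ∈ Finset.univ \ ({y0, y1} : Finset _), f y
      = ((2:ℝ) ^ (ℓ+1) - 2) * (min (E * (1 - γ)) 1 * u) := by
    rw [Finset.sum_congr rfl (fun y hy => by
      simp only [Finset.mem_sdiff, Finset.mem_insert, Finset.mem_singleton] at hy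
      exact hfgen y (fun h => hy.2 (Or.inl h)) (fun h => hy.2 (Or.inr h)))]
    rw [Finset.sum_const, nsmul_eq_mul, hcard]
  have hgoal : ∑ y, f y = ((2:ℝ) ^ (ℓ+1) - 2) * (min (E * (1 - γ)) 1 * u)
      + (u * (S * (1 - γ)) + min (E * (1 - γ) * u) (u * (2 - S * (1 - γ)))) := by
    rw [← hsplit, hpair, hconst, hf0, hf1]
  show 1 - γ ≤ ∑ y, f y
  rw [hgoal]
  clear hsplit hpair hconst hgoal hcard hcardY hfgen hf1 hf0 hp0 hp1 hq hf hne hne2 hy0 hy1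
  clear f y0 y1
  clear_value E S u
  clear hE hS hu
  generalize hn : (2:ℝ) ^ (ℓ+1) = n at hun ⊢
  have hrw : (n - 2) * (min (E * (1 - γ)) 1 * u)
      = min (E * (1 - γ)) 1 - 2 * (min (E * (1 - γ)) 1 * u) := by
    linear_combination (min (E * (1 - γ)) 1) * hun
  rw [hrw]
  clear hrw hun hn n
  have huSE : u * (S * (1 - γ)) * E = u * (1 - γ) := by
    linear_combination u * (1 - γ) * hES
  have huP : u * (E * (1 - γ)) * (S * (1 - γ)) = u * (1 - γ)^2 := by
    linear_combination u * (1 - γ)^2 * hES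
  rcases le_total (E * (1 - γ)) 1 with h1 | h1
  · rw [min_eq_left h1]
    rcases le_total (E * (1 - γ) * u) (u * (2 - S * (1 - γ))) with h2 | h2
    · rw [min_eq_left h2]
      nlinarith [mul_nonneg (mul_nonneg h1γ.le (by linarith : (0:ℝ) ≤ E - 1))
          (by nlinarith [mul_le_mul_of_nonneg_right hu4 (by linarith : (0:ℝ) ≤ E + 1)] :
            (0:ℝ) ≤ E - u * (E + 1)),
        hEpos, huSE]
    · rw [min_eq_right h2]
      nlinarith [mul_pos hupos (show (0:ℝ) < 1 - S * (1 - γ) by linarith),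
        mul_nonneg hupos.le (show (0:ℝ) ≤ 1 - E * (1 - γ) by linarith)]
  · rw [min_eq_right h1]
    rcases le_total (E * (1 - γ) * u) (u * (2 - S * (1 - γ))) with h2 | h2
    · rw [min_eq_left h2]
      nlinarith [(show (0:ℝ) ≤ E * (1 - γ) - 1 by linarith),
        mul_nonneg hupos.le (sq_nonneg (E * (1 - γ) - 1)),
        mul_nonneg hγ0.le (show (0:ℝ) ≤ E * (1 - γ) - 1 by linarith),
        huP,
        mul_nonneg (show (0:ℝ) ≤ 1/4 - u by linarith) hγ0.le,
        mul_nonneg hupos.le (sq_nonneg γ)]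
    · rw [min_eq_right h2]
      linarith
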